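/- Let 0 < δ < 1 and let n ≥ 2 be even. Consider one iteration of the modified SEMO or modified GSEMO maximizing COCZ, let ℓ be the maximum g₁-value in the current population P⁽ᵗ⁾, and let Z_t be the number of individuals in P⁽ᵗ⁾ with g₁-value ℓ. If 1 ≤ Z_t < δn/2, then the probability that the number of individuals with g₁-value ℓ in the next population equals Z_t + 1 is at least (1/(n/2+1)) · (1−δ)/(4e). -/

import Mathlib

open scoped ENNReal

namespace GSEMOPaper

attribute [local instance] Classical.propDecidable

/-- An individual (bit string) of length `n`. -/
abbrev Individual (n : ℕ) := Fin n → Bool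

/-- `u` weakly dominates `v` (maximization, two objectives). -/
def weaklyDom (u v : ℝ × ℝ) : Prop := v.1 ≤ u.1 ∧ v.2 ≤ u.2

/-- `u` strictly dominates `v`. -/
def strictlyDom (u v : ℝ × ℝ) : Prop := weaklyDom u v ∧ u ≠ v

/-- The Pareto front of a bi-objective function on bit strings. -/
def paretoFront {n : ℕ} (f : Individual n → ℝ × ℝ) : Set (ℝ × ℝ) :=
  {u | ∃ x : Individual n, f x = u ∧ ∀ y : Individual n, ¬ strictlyDom (f y) (f x)}

/-- The objective values of the population `P` cover the Pareto front of `f`. -/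
def covers {n : ℕ} (f : Individual n → ℝ × ℝ) (P : Finset (Individual n)) : Prop :=
  paretoFront f ⊆ f '' (P : Set (Individual n))

/-- A valid (G)SEMO population: distinct members are mutually non-dominated
(in particular they have pairwise distinct objective values). -/
def validPop {n : ℕ} (f : Individual n → ℝ × ℝ) (P : Finset (Individual n)) : Prop :=
  ∀ x ∈ P, ∀ y ∈ P, x ≠ y → ¬ weaklyDom (f x) (f y)

/-- Survival selection of the (G)SEMO: remove all individuals weakly dominated by the
offspring `y`, then insert `y` unless it is strictly dominated by a remaining individual. -/
noncomputable def updatePop {n : ℕ} (f : Individual n → ℝ × ℝ)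
    (P : Finset (Individual n)) (y : Individual n) : Finset (Individual n) :=
  let Q := P.filter fun z => ¬ weaklyDom (f y) (f z)
  if ∃ z ∈ Q, strictlyDom (f z) (f y) then Q else insert y Q

/-- Flip position `i` of `x`. -/
def flipOne {n : ℕ} (x : Individual n) (i : Fin n) : Individual n :=
  Function.update x i (!x i)

/-- One-bit mutation (SEMO): flip exactly one uniformly random position. -/
noncomputable def oneBitMut {n : ℕ} (x : Individual n) : PMF (Individual n) :=
  if h : n = 0 then PMF.pure x
  else
    haveI : Nonempty (Fin n) := ⟨⟨0, Nat.pos_of_ne_zero h⟩⟩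
    (PMF.uniformOfFintype (Fin n)).map (flipOne x)

/-- A vector of `m` independent Bernoulli(`p`) bits. -/
noncomputable def bernoulliVec (p : ℝ≥0∞) (hp : p ≤ 1) : (m : ℕ) → PMF (Fin m → Bool)
  | 0 => PMF.pure fun i => i.elim0
  | m + 1 => (PMF.ofFintype (fun b => cond b p (1 - p)) (by simp [Fintype.sum_bool, add_tsub_cancel_of_le hp])).bind fun b => (bernoulliVec p hp m).map fun v => Fin.cons b v

/-- Standard bit mutation (GSEMO): flip each position independently with probability `1/n`. -/
noncomputable def stdBitMut {n : ℕ} (x : Individual n) : PMF (Individual n) :=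
  if h : n = 0 then PMF.pure x
  else
    (bernoulliVec ((n : ℝ≥0∞))⁻¹
        (ENNReal.inv_le_one.mpr (by exact_mod_cast Nat.one_le_iff_ne_zero.mpr h)) n).map
      fun mask => fun j => if mask j then !x j else x j

/-- One iteration of the (G)SEMO maximizing `f`, with mutation operator `mutOp`:
choose a parent uniformly at random from the population, mutate it, and perform
survival selection. -/
noncomputable def semoStep {n : ℕ} (f : Individual n → ℝ × ℝ)
    (mutOp : Individual n → PMF (Individual n))
    (P : Finset (Individual n)) : PMF (Finset (Individual n)) :=
  if h : P.Nonempty then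
    (PMF.uniformOfFinset P h).bind fun x => (mutOp x).map fun y => updatePop f P y
  else PMF.pure P

/-- One iteration of the modified (G)SEMO: choose `i ∈ {0, …, m}` uniformly at random;
if the population contains no individual `z` with `idx z = i`, nothing happens;
otherwise the (unique) such individual is the parent. -/
noncomputable def modStep {n : ℕ} (f : Individual n → ℝ × ℝ)
    (mutOp : Individual n → PMF (Individual n))
    (idx : Individual n → ℕ) (m : ℕ)
    (P : Finset (Individual n)) : PMF (Finset (Individual n)) :=
  (PMF.uniformOfFintype (Fin (m + 1))).bind fun i =>
    let S := P.filter fun z => idx z = (i : ℕ)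
    if h : S.Nonempty then
      (PMF.uniformOfFinset S h).bind fun x => (mutOp x).map fun y => updatePop f P y
    else PMF.pure P

/-- Distribution of the trajectory (list of states, most recent first) of `t` iterations of
the Markov chain with one-step kernel `step`, started in state `s`. The resulting lists
have length `t + 1` and record the states `P⁽ᵗ⁾, …, P⁽⁰⁾`. -/
noncomputable def run {σ : Type*} [Inhabited σ] (step : σ → PMF σ) (s : σ) : ℕ → PMF (List σ)
  | 0 => PMF.pure [s]
  | t + 1 => (run step s t).bind fun l => (step l.headI).map fun s' => s' :: l

/-- The probability that a sample from `p` lies in the event `E`. -/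
noncomputable def prob {α : Type*} (p : PMF α) (E : Set α) : ℝ≥0∞ := p.toOuterMeasure E

/-- The uniform distribution on `{0,1}ⁿ` used for initialization. -/
noncomputable def uniformInit (n : ℕ) : PMF (Individual n) :=
  PMF.uniformOfFintype (Individual n)

/-- The number of ones of a bit string. -/
def ones {n : ℕ} (x : Individual n) : ℕ :=
  (Finset.univ.filter fun i : Fin n => x i = true).card

/-- The number of zeros of a bit string. -/
def zeros {n : ℕ} (x : Individual n) : ℕ :=
  (Finset.univ.filter fun i : Fin n => x i = false).card

/-- `g₁ x`: the number of ones in the first half (positions `0, …, n/2 - 1`). -/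
def g1 {n : ℕ} (x : Individual n) : ℕ :=
  (Finset.univ.filter fun i : Fin n => (i : ℕ) < n / 2 ∧ x i = true).card

/-- `g₂ x`: the number of ones in the second half (positions `n/2, …, n - 1`). -/
def g2 {n : ℕ} (x : Individual n) : ℕ :=
  (Finset.univ.filter fun i : Fin n => n / 2 ≤ (i : ℕ) ∧ x i = true).card

/-- The COCZ benchmark: `COCZ(x) = (g₁(x) + g₂(x), g₁(x) + n/2 − g₂(x))`. -/
noncomputable def cocz {n : ℕ} (x : Individual n) : ℝ × ℝ :=
  (((g1 x + g2 x : ℕ) : ℝ), (g1 x : ℝ) + (n : ℝ) / 2 - (g2 x : ℝ))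

/-- The OneMinMax benchmark: `OMM(x) = (|x|₁, n − |x|₁)`. -/
noncomputable def omm {n : ℕ} (x : Individual n) : ℝ × ℝ :=
  ((ones x : ℝ), (n : ℝ) - (ones x : ℝ))

/-- The OJZJ benchmark with gap parameter `k`. -/
noncomputable def ojzj (n k : ℕ) (x : Individual n) : ℝ × ℝ :=
  ((if ones x ≤ n - k ∨ x = fun _ => true then ((k + ones x : ℕ) : ℝ)
      else ((n - ones x : ℕ) : ℝ)),
   (if zeros x ≤ n - k ∨ x = fun _ => false then ((k + zeros x : ℕ) : ℝ)
      else ((n - zeros x : ℕ) : ℝ)))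


open Finset in
lemma g1_flipOne (n : ℕ) (x : Individual n) (j : Fin n) (hj : n/2 ≤ (j:ℕ)) :
    g1 (flipOne x j) = g1 x := by
  unfold g1
  congr 1
  apply Finset.filter_congr
  intro i _
  rcases eq_or_ne i j with rfl | hij
  · simp only [flipOne]
    constructor <;> rintro ⟨h1, _⟩ <;> omega
  · simp [flipOne, Function.update_of_ne hij]

open Finset in
lemma g2_flipOne_false (n : ℕ) (x : Individual n) (j : Fin n) (hj : n/2 ≤ (j:ℕ))
    (hx : x j = false) : g2 (flipOne x j) = g2 x + 1 := by
  unfold g2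
  have : (univ.filter fun i : Fin n => n/2 ≤ (i:ℕ) ∧ flipOne x j i = true)
      = insert j (univ.filter fun i : Fin n => n/2 ≤ (i:ℕ) ∧ x i = true) := by
    ext i
    rcases eq_or_ne i j with rfl | hij
    · simp [flipOne, hx, hj]
    · simp only [Finset.mem_insert, Finset.mem_filter, Finset.mem_univ, hij]; simp [flipOne, Function.update_of_ne hij, hij]
  rw [this, Finset.card_insert_of_notMem (by simp [hx])]

open Finset in
lemma g2_flipOne_true (n : ℕ) (x : Individual n) (j : Fin n) (hj : n/2 ≤ (j:ℕ))
    (hx : x j = true) : g2 (flipOne x j) + 1 = g2 x := by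
  unfold g2
  have : (univ.filter fun i : Fin n => n/2 ≤ (i:ℕ) ∧ x i = true)
      = insert j (univ.filter fun i : Fin n => n/2 ≤ (i:ℕ) ∧ flipOne x j i = true) := by
    ext i
    rcases eq_or_ne i j with rfl | hij
    · simp [flipOne, hx, hj]
    · simp only [Finset.mem_insert, Finset.mem_filter, Finset.mem_univ, hij]; simp [flipOne, Function.update_of_ne hij, hij]
  rw [this, Finset.card_insert_of_notMem (by simp [flipOne, hx])]
open Finset in
lemma secondHalf_card (n : ℕ) (hn2 : 2 ≤ n) :
    (univ.filter fun i : Fin n => n/2 ≤ (i:ℕ)).card = n - n/2 := by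
  have hm : n/2 < n := Nat.div_lt_self (by omega) (by norm_num)
  have : (univ.filter fun i : Fin n => n/2 ≤ (i:ℕ)) = Finset.Ici (⟨n/2, hm⟩ : Fin n) := by
    ext i; simp [Fin.le_def]
  rw [this, Fin.card_Ici]

open Finset in
lemma g2_add_zeros (n : ℕ) (hn2 : 2 ≤ n) (x : Individual n) :
    g2 x + (univ.filter fun i : Fin n => n/2 ≤ (i:ℕ) ∧ x i = false).card = n - n/2 := by
  rw [← secondHalf_card n hn2]
  unfold g2
  rw [show (univ.filter fun i : Fin n => n/2 ≤ (i:ℕ) ∧ x i = true)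
      = (univ.filter fun i : Fin n => n/2 ≤ (i:ℕ)).filter (fun i => x i = true) by
    rw [Finset.filter_filter]]
  rw [show (univ.filter fun i : Fin n => n/2 ≤ (i:ℕ) ∧ x i = false)
      = (univ.filter fun i : Fin n => n/2 ≤ (i:ℕ)).filter (fun i => ¬ (x i = true)) by
    rw [Finset.filter_filter]; congr 1; ext i; simp]
  exact Finset.card_filter_add_card_filter_not _

lemma g2_le (n : ℕ) (hn2 : 2 ≤ n) (x : Individual n) : g2 x ≤ n - n/2 := by
  have := g2_add_zeros n hn2 x; omega

lemma weaklyDom_cocz_iff (n : ℕ) (u v : Individual n) :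
    weaklyDom (cocz u) (cocz v) ↔
      (g1 v + g2 v ≤ g1 u + g2 u ∧ (g1 v : ℤ) - g2 v ≤ (g1 u : ℤ) - g2 u) := by
  unfold weaklyDom cocz
  constructor
  · rintro ⟨h1, h2⟩
    simp only at h1 h2
    constructor
    · exact_mod_cast h1
    · have : (g1 v : ℝ) - g2 v ≤ (g1 u : ℝ) - g2 u := by linarith
      exact_mod_cast this
  · rintro ⟨h1, h2⟩
    have h1' : ((g1 v + g2 v : ℕ) : ℝ) ≤ ((g1 u + g2 u : ℕ) : ℝ) := by exact_mod_cast h1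
    have h2' : (g1 v : ℝ) - g2 v ≤ (g1 u : ℝ) - g2 u := by exact_mod_cast h2
    exact ⟨h1', by simp only; linarith⟩

lemma cocz_eq_iff (n : ℕ) (u v : Individual n) :
    cocz u = cocz v ↔ (g1 u = g1 v ∧ g2 u = g2 v) := by
  unfold cocz
  rw [Prod.ext_iff]
  constructor
  · rintro ⟨h1, h2⟩
    simp only at h1 h2
    have e1 : g1 u + g2 u = g1 v + g2 v := by exact_mod_cast h1
    have e2 : (g1 u : ℝ) - g2 u = (g1 v : ℝ) - g2 v := by linarith
    have e2' : (g1 u : ℤ) - g2 u = (g1 v : ℤ) - g2 v := by exact_mod_cast e2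
    omega
  · rintro ⟨h1, h2⟩
    rw [h1, h2]; exact ⟨rfl, rfl⟩

lemma g2_injOn (n : ℕ) (P : Finset (Individual n)) (hvalid : validPop cocz P)
    (x : Individual n) (hx : x ∈ P) (y : Individual n) (hy : y ∈ P)
    (hg : g2 x = g2 y) : x = y := by
  by_contra hne
  rcases le_total (g1 x) (g1 y) with h | h
  · exact hvalid y hy x hx (Ne.symm hne)
      ((weaklyDom_cocz_iff n y x).mpr (by constructor <;> omega))
  · exact hvalid x hx y hy hne
      ((weaklyDom_cocz_iff n x y).mpr (by constructor <;> omega))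
lemma updatePop_level (n : ℕ) (P : Finset (Individual n)) (ℓ : ℕ)
    (hmax : ∀ z ∈ P, g1 z ≤ ℓ) (y : Individual n) (hy1 : g1 y = ℓ)
    (hy2 : ∀ z ∈ P, g1 z = ℓ → g2 z ≠ g2 y) :
    (updatePop cocz P y).filter (fun z => g1 z = ℓ)
      = insert y (P.filter fun z => g1 z = ℓ) := by
  have hQ : updatePop cocz P y
      = insert y (P.filter fun z => ¬ weaklyDom (cocz y) (cocz z)) := by
    unfold updatePop
    rw [if_neg]
    rintro ⟨z, hzQ, hzs⟩
    have hzP : z ∈ P := (Finset.mem_filter.mp hzQ).1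
    have hwd := (weaklyDom_cocz_iff n z y).mp hzs.1
    have hzle := hmax z hzP
    have hgz : g1 z = ℓ := by omega
    exact hy2 z hzP hgz (by omega)
  rw [hQ, Finset.filter_insert, if_pos hy1]
  congr 1
  rw [Finset.filter_filter]
  apply Finset.filter_congr
  intro z hz
  constructor
  · rintro ⟨_, h⟩; exact h
  · intro h
    refine ⟨fun hwd => ?_, h⟩
    have := (weaklyDom_cocz_iff n y z).mp hwd
    exact hy2 z hz h (by omega)

lemma updatePop_level_card (n : ℕ) (P : Finset (Individual n)) (ℓ : ℕ)
    (hmax : ∀ z ∈ P, g1 z ≤ ℓ) (y : Individual n) (hy1 : g1 y = ℓ)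
    (hy2 : ∀ z ∈ P, g1 z = ℓ → g2 z ≠ g2 y) :
    ((updatePop cocz P y).filter (fun z => g1 z = ℓ)).card
      = (P.filter fun z => g1 z = ℓ).card + 1 := by
  rw [updatePop_level n P ℓ hmax y hy1 hy2, Finset.card_insert_of_notMem]
  · intro hmem
    rw [Finset.mem_filter] at hmem
    exact hy2 y hmem.1 hmem.2 rfl

lemma bernoulliVec_apply (p : ℝ≥0∞) (hp : p ≤ 1) :
    ∀ (m : ℕ) (v : Fin m → Bool),
      bernoulliVec p hp m v = ∏ i, (if v i then p else 1 - p)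
  | 0, v => by
    have hv : v = fun i => i.elim0 := funext fun i => i.elim0
    subst hv
    simp [bernoulliVec]
  | m + 1, v => by
    have hrw : bernoulliVec p hp (m+1)
        = (PMF.ofFintype (fun b => cond b p (1 - p)) (by simp [Fintype.sum_bool, add_tsub_cancel_of_le hp])).bind fun b => (bernoulliVec p hp m).map fun w => Fin.cons b w :=
      rfl
    rw [hrw, PMF.bind_apply]
    have hmap : ∀ b : Bool, ((bernoulliVec p hp m).map fun w => Fin.cons b w) v
        = if v 0 = b then bernoulliVec p hp m (Fin.tail v) else 0 := by
      intro b
      rw [PMF.map_apply]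
      split_ifs with h
      · rw [tsum_eq_single (Fin.tail v)]
        · rw [if_pos]
          conv_lhs => rw [← Fin.cons_self_tail v, h]
        · intro w hw
          rw [if_neg]
          intro hc
          exact hw (by rw [hc, Fin.tail_cons])
      · refine ENNReal.tsum_eq_zero.mpr fun w => ?_
        rw [if_neg]
        intro hc
        exact h (by rw [hc, Fin.cons_zero])
    simp only [hmap]
    rw [tsum_bool, Fin.prod_univ_succ, bernoulliVec_apply p hp m (Fin.tail v)]
    cases hv0 : v 0 <;>
      simp [PMF.ofFintype_apply, hv0, Fin.tail] <;> congr
lemma exp_neg_one_le (n : ℕ) (hn : 2 ≤ n) :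
    Real.exp (-1) ≤ (1 - 1/(n:ℝ))^(n-1) := by
  set k : ℕ := n - 1 with hk
  have hk1 : 1 ≤ k := by omega
  have hkpos : (0:ℝ) < k := by exact_mod_cast hk1
  have hnk : (n:ℝ) = (k:ℝ) + 1 := by
    have : n = k + 1 := by omega
    exact_mod_cast this
  have h1 : 1 + 1/(k:ℝ) ≤ Real.exp (1/(k:ℝ)) := by
    have := Real.add_one_le_exp (1/(k:ℝ)); linarith
  have h2 : Real.exp (-(1/(k:ℝ))) ≤ 1 - 1/(n:ℝ) := by
    rw [Real.exp_neg]
    have hpos : (0:ℝ) < 1 + 1/(k:ℝ) := by positivity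
    have hle : (Real.exp (1/(k:ℝ)))⁻¹ ≤ (1 + 1/(k:ℝ))⁻¹ :=
      inv_anti₀ hpos h1
    refine hle.trans (le_of_eq ?_)
    rw [hnk]
    field_simp
    ring
  have h3 : Real.exp (-1) = (Real.exp (-(1/(k:ℝ))))^k := by
    rw [← Real.exp_nat_mul]
    congr 1
    field_simp
  rw [h3]
  exact pow_le_pow_left₀ (Real.exp_pos _).le h2 k

lemma ofReal_inv_nat (n : ℕ) (hn : 0 < n) :
    ENNReal.ofReal (1/(n:ℝ)) = ((n:ℝ≥0∞))⁻¹ := by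
  rw [one_div, ENNReal.ofReal_inv_of_pos (by exact_mod_cast hn), ENNReal.ofReal_natCast]

lemma mut_lb (n : ℕ) (hn2 : 2 ≤ n) (mutOp : Individual n → PMF (Individual n))
    (hmut : mutOp = oneBitMut ∨ mutOp = stdBitMut)
    (x : Individual n) (j : Fin n) :
    ENNReal.ofReal (1/(Real.exp 1 * n)) ≤ mutOp x (flipOne x j) := by
  have hn0 : n ≠ 0 := by omega
  have hnpos : (0:ℝ) < n := by exact_mod_cast Nat.pos_of_ne_zero hn0
  have hkey : ENNReal.ofReal (1/(Real.exp 1 * n))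
      ≤ ENNReal.ofReal ((1/(n:ℝ)) * (1 - 1/(n:ℝ))^(n-1)) := by
    apply ENNReal.ofReal_le_ofReal
    have he := exp_neg_one_le n hn2
    have hexp : Real.exp (-1) = (Real.exp 1)⁻¹ := by
      rw [Real.exp_neg]
    rw [hexp] at he
    have hepos : (0:ℝ) < Real.exp 1 := Real.exp_pos 1
    calc 1/(Real.exp 1 * n) = (1/(n:ℝ)) * (Real.exp 1)⁻¹ := by
          field_simp
      _ ≤ (1/(n:ℝ)) * (1 - 1/(n:ℝ))^(n-1) := by
          apply mul_le_mul_of_nonneg_left he (by positivity)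
  haveI : Nonempty (Fin n) := ⟨⟨0, by omega⟩⟩
  rcases hmut with rfl | rfl
  · -- oneBitMut
    have hsum : (oneBitMut x) (flipOne x j) = ((n:ℝ≥0∞))⁻¹ := by
      unfold oneBitMut
      rw [dif_neg hn0, PMF.map_apply]
      rw [tsum_eq_single j ?_]
      · rw [if_pos rfl, PMF.uniformOfFintype_apply, Fintype.card_fin]
      · intro b hb
        rw [if_neg]
        intro hc
        have := congrFun hc j
        rw [show flipOne x j j = !x j by simp [flipOne],
          show flipOne x b j = x j by simp [flipOne, Function.update_of_ne (Ne.symm hb)]] at this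
        simp at this
    rw [hsum, ← ofReal_inv_nat n (by omega)]
    apply ENNReal.ofReal_le_ofReal
    rw [one_div, one_div]
    exact inv_anti₀ hnpos
      (le_mul_of_one_le_left hnpos.le (Real.one_le_exp zero_le_one))
  · -- stdBitMut
    unfold stdBitMut
    rw [dif_neg hn0]
    rw [PMF.map_apply]
    set mask : Fin n → Bool := fun i => decide (i = j) with hmask
    have happ : (fun j' => if mask j' then !x j' else x j') = flipOne x j := by
      funext i
      rcases eq_or_ne i j with rfl | hij
      · simp [hmask, flipOne]
      · simp [hmask, hij, flipOne, Function.update_of_ne hij]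
    have hval : bernoulliVec ((n:ℝ≥0∞))⁻¹
        (ENNReal.inv_le_one.mpr (by exact_mod_cast Nat.one_le_iff_ne_zero.mpr hn0)) n mask
        = ((n:ℝ≥0∞))⁻¹ * (1 - ((n:ℝ≥0∞))⁻¹)^(n-1) := by
      rw [bernoulliVec_apply]
      rw [← Finset.mul_prod_erase Finset.univ _ (Finset.mem_univ j)]
      have h1 : (if mask j then ((n:ℝ≥0∞))⁻¹ else 1 - ((n:ℝ≥0∞))⁻¹) = ((n:ℝ≥0∞))⁻¹ := by
        simp [hmask]
      rw [h1]
      congr 1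
      rw [Finset.prod_congr rfl (fun i hi => ?_), Finset.prod_const,
        Finset.card_erase_of_mem (Finset.mem_univ j), Finset.card_univ, Fintype.card_fin]
      have hij : i ≠ j := Finset.ne_of_mem_erase hi
      simp [hmask, hij]
    have hconv : ((n:ℝ≥0∞))⁻¹ * (1 - ((n:ℝ≥0∞))⁻¹)^(n-1)
        = ENNReal.ofReal ((1/(n:ℝ)) * (1 - 1/(n:ℝ))^(n-1)) := by
      rw [ENNReal.ofReal_mul (by positivity), ENNReal.ofReal_pow (by
        rw [sub_nonneg]
        rw [div_le_one hnpos]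
        exact_mod_cast hn2.trans' (by norm_num) ) , ofReal_inv_nat n (by omega)]
      congr 2
      rw [ENNReal.ofReal_sub _ (by positivity), ENNReal.ofReal_one, ofReal_inv_nat n (by omega)]
    refine hkey.trans ?_
    rw [← hconv, ← hval]
    refine le_trans (le_of_eq ?_) (ENNReal.le_tsum mask)
    rw [if_pos happ.symm]
lemma flipOne_injOn (n : ℕ) (x : Individual n) {j j' : Fin n} (h : flipOne x j = flipOne x j') :
    j = j' := by
  by_contra hne
  have := congrFun h j
  rw [show flipOne x j j = !x j by simp [flipOne],
    show flipOne x j' j = x j by simp [flipOne, Function.update_of_ne (fun hc => hne hc)]] at this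
  simp at this

lemma map_mut_lb (n : ℕ) (hn2 : 2 ≤ n) (mutOp : Individual n → PMF (Individual n))
    (hmut : mutOp = oneBitMut ∨ mutOp = stdBitMut)
    (P : Finset (Individual n)) (x : Individual n)
    (E : Set (Finset (Individual n))) (J : Finset (Fin n))
    (hJ : ∀ j ∈ J, updatePop cocz P (flipOne x j) ∈ E) :
    (J.card : ℝ≥0∞) * ENNReal.ofReal (1/(Real.exp 1 * n)) ≤
      ((mutOp x).map fun y => updatePop cocz P y).toOuterMeasure E := by
  rw [PMF.toOuterMeasure_map_apply, PMF.toOuterMeasure_apply]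
  have hinj : Set.InjOn (flipOne x) J := fun j _ j' _ h => flipOne_injOn n x h
  calc (J.card : ℝ≥0∞) * ENNReal.ofReal (1/(Real.exp 1 * n))
      ≤ ∑ j ∈ J, (mutOp x) (flipOne x j) := by
        rw [← nsmul_eq_mul]
        exact Finset.card_nsmul_le_sum J _ _ (fun j _ => mut_lb n hn2 mutOp hmut x j)
    _ = ∑ y ∈ J.image (flipOne x), (mutOp x) y := (Finset.sum_image (fun j hj j' hj' h =>
        hinj hj hj' h)).symm
    _ = ∑ y ∈ J.image (flipOne x),
        Set.indicator ((fun y => updatePop cocz P y) ⁻¹' E) (mutOp x) y := by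
        apply Finset.sum_congr rfl
        intro y hy
        rcases Finset.mem_image.mp hy with ⟨j, hjJ, rfl⟩
        exact (Set.indicator_of_mem (Set.mem_preimage.mpr (hJ j hjJ)) _).symm
    _ ≤ ∑' y, Set.indicator ((fun y => updatePop cocz P y) ⁻¹' E) (mutOp x) y :=
        ENNReal.sum_le_tsum _

lemma branch_lb (n : ℕ) (hn2 : 2 ≤ n) (mutOp : Individual n → PMF (Individual n))
    (hmut : mutOp = oneBitMut ∨ mutOp = stdBitMut)
    (P : Finset (Individual n)) (x : Individual n) (i : ℕ)
    (hS : P.filter (fun z => g2 z = i) = {x})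
    (E : Set (Finset (Individual n))) (J : Finset (Fin n))
    (hJ : ∀ j ∈ J, updatePop cocz P (flipOne x j) ∈ E) :
    (J.card : ℝ≥0∞) * ENNReal.ofReal (1/(Real.exp 1 * n)) ≤
      (if h : (P.filter fun z => g2 z = i).Nonempty then
        (PMF.uniformOfFinset _ h).bind fun z => (mutOp z).map fun y => updatePop cocz P y
      else PMF.pure P).toOuterMeasure E := by
  have hne : (P.filter fun z => g2 z = i).Nonempty := by
    rw [hS]; exact ⟨x, Finset.mem_singleton_self x⟩
  rw [dif_pos hne, PMF.toOuterMeasure_bind_apply]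
  have hx1 : (PMF.uniformOfFinset (P.filter fun z => g2 z = i) hne) x = 1 := by
    rw [PMF.uniformOfFinset_apply, if_pos (by rw [hS]; exact Finset.mem_singleton_self x),
      hS, Finset.card_singleton, Nat.cast_one, inv_one]
  calc (J.card : ℝ≥0∞) * ENNReal.ofReal (1/(Real.exp 1 * n))
      ≤ (PMF.uniformOfFinset (P.filter fun z => g2 z = i) hne) x *
        ((mutOp x).map fun y => updatePop cocz P y).toOuterMeasure E := by
        rw [hx1, one_mul]
        exact map_mut_lb n hn2 mutOp hmut P x E J hJ
    _ ≤ _ := ENNReal.le_tsum x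

/-- one iteration of the modified SEMO/GSEMO maximizing COCZ. If `ℓ` is the
maximum `g₁`-value in the current population `P` and `Z` the number of individuals of `P`
with `g₁`-value `ℓ`, with `1 ≤ Z < δn/2`, then the probability that the next population has
exactly `Z + 1` individuals with `g₁`-value `ℓ` is at least `(1/(n/2+1))·(1−δ)/(4e)`. -/
theorem modified_gsemo_probability_to_spread
    (n : ℕ) (hn : Even n) (hn2 : 2 ≤ n) (δ : ℝ) (hδ0 : 0 < δ) (hδ1 : δ < 1)
    (mutOp : Individual n → PMF (Individual n))
    (hmut : mutOp = oneBitMut ∨ mutOp = stdBitMut)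
    (P : Finset (Individual n)) (hP : P.Nonempty) (hvalid : validPop cocz P)
    (ℓ Z : ℕ) (hℓ : ℓ = P.sup g1) (hZ : Z = (P.filter fun x => g1 x = ℓ).card)
    (hZ1 : 1 ≤ Z) (hZδ : (Z : ℝ) < δ * n / 2) :
    ENNReal.ofReal (1 / ((n : ℝ) / 2 + 1) * ((1 - δ) / (4 * Real.exp 1))) ≤
      prob (modStep cocz mutOp g2 (n / 2) P)
        {Q | (Q.filter fun x => g1 x = ℓ).card = Z + 1} := by
  have hm1 : 1 ≤ n / 2 := by omega
  have hnm : n = 2 * (n / 2) := by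
    rcases hn with ⟨k, hk⟩; omega
  have hmr : (n:ℝ)/2 = ((n/2 : ℕ):ℝ) := by
    have h' : (n:ℝ) = ((2 * (n/2) : ℕ) : ℝ) := by exact_mod_cast congrArg (Nat.cast (R := ℝ)) hnm
    rw [h']; push_cast; ring
  have hmax : ∀ z ∈ P, g1 z ≤ ℓ := fun z hz => hℓ ▸ Finset.le_sup hz
  have hLne : (P.filter fun z => g1 z = ℓ).Nonempty := by
    rw [← Finset.card_pos, ← hZ]; omega
  set G := (P.filter fun z => g1 z = ℓ).image g2 with hG
  have hGall : ∀ z ∈ P, g1 z = ℓ → g2 z ∈ G := fun z hz h1 =>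
    Finset.mem_image_of_mem g2 (Finset.mem_filter.mpr ⟨hz, h1⟩)
  have hGcard : G.card = Z := by
    rw [hZ, hG]
    apply Finset.card_image_of_injOn
    intro u hu v hv huv
    exact g2_injOn n P hvalid u (Finset.mem_filter.mp hu).1 v (Finset.mem_filter.mp hv).1 huv
  have hGle : ∀ s ∈ G, s ≤ n/2 := by
    intro s hs
    obtain ⟨z, _, rfl⟩ := Finset.mem_image.mp hs
    have := g2_le n hn2 z
    omega
  have hGne : G.Nonempty := hLne.image g2
  set b := G.max' hGne with hb
  have hbG : b ∈ G := G.max'_mem hGne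
  have hbm : b ≤ n/2 := hGle b hbG
  have hQbex : ∃ a, ∀ c, a ≤ c → c ≤ b → c ∈ G := ⟨b, fun c h1 h2 => (le_antisymm h2 h1) ▸ hbG⟩
  set a := Nat.find hQbex with ha
  have hQa : ∀ c, a ≤ c → c ≤ b → c ∈ G := Nat.find_spec hQbex
  have hab : a ≤ b := Nat.find_min' hQbex (fun c h1 h2 => (le_antisymm h2 h1) ▸ hbG)
  have haG : a ∈ G := hQa a le_rfl hab
  have ha1 : 1 ≤ a → (a-1) ∉ G := by
    intro h1 hmem
    refine Nat.find_min hQbex (m := a - 1) (by omega) ?_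
    intro c hc1 hc2
    rcases Nat.eq_or_lt_of_le hc1 with heq | hlt
    · rwa [← heq]
    · exact hQa c (by omega) hc2
  have hbaZ : b + 1 - a ≤ Z := by
    have hsub : Finset.Icc a b ⊆ G := fun c hc =>
      hQa c (Finset.mem_Icc.mp hc).1 (Finset.mem_Icc.mp hc).2
    have := Finset.card_le_card hsub
    rw [Nat.card_Icc] at this
    omega
  obtain ⟨xb, hxbL, hxbg2⟩ := Finset.mem_image.mp hbG
  obtain ⟨xa, hxaL, hxag2⟩ := Finset.mem_image.mp haG
  have hxbP : xb ∈ P := (Finset.mem_filter.mp hxbL).1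
  have hxbg1 : g1 xb = ℓ := (Finset.mem_filter.mp hxbL).2
  have hxaP : xa ∈ P := (Finset.mem_filter.mp hxaL).1
  have hxag1 : g1 xa = ℓ := (Finset.mem_filter.mp hxaL).2
  have hsingle : ∀ x : Individual n, x ∈ P → P.filter (fun z => g2 z = g2 x) = {x} := by
    intro x hx
    ext z
    simp only [Finset.mem_filter, Finset.mem_singleton]
    constructor
    · rintro ⟨hzP, hzg⟩; exact g2_injOn n P hvalid z hzP x hx hzg
    · rintro rfl; exact ⟨hx, rfl⟩
  set E : Set (Finset (Individual n)) := {Q | (Q.filter fun x => g1 x = ℓ).card = Z + 1} with hE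
  have hgood : ∀ x : Individual n, x ∈ P → g1 x = ℓ → ∀ j : Fin n, n/2 ≤ (j:ℕ) →
      g2 (flipOne x j) ∉ G → updatePop cocz P (flipOne x j) ∈ E := by
    intro x hx hg1 j hj hflip
    show ((updatePop cocz P (flipOne x j)).filter fun z => g1 z = ℓ).card = Z + 1
    rw [updatePop_level_card n P ℓ hmax _ (by rw [g1_flipOne n x j hj, hg1]) ?_, ← hZ]
    intro z hzP hzℓ hz2
    exact hflip (hz2 ▸ hGall z hzP hzℓ)
  set Jb := Finset.univ.filter (fun j : Fin n => n/2 ≤ (j:ℕ) ∧ xb j = false) with hJb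
  have hJbcard : Jb.card = n/2 - b := by
    have := g2_add_zeros n hn2 xb
    rw [hxbg2, ← hJb] at this
    omega
  set Ja := Finset.univ.filter (fun j : Fin n => n/2 ≤ (j:ℕ) ∧ xa j = true) with hJa
  have hJacard : Ja.card = a := hxag2
  have hJbgood : ∀ j ∈ Jb, updatePop cocz P (flipOne xb j) ∈ E := by
    intro j hj
    obtain ⟨hj1, hj2⟩ := (Finset.mem_filter.mp hj).2
    apply hgood xb hxbP hxbg1 j hj1
    rw [g2_flipOne_false n xb j hj1 hj2, hxbg2]
    intro hc
    have := G.le_max' _ hc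
    omega
  have hJagood : ∀ j ∈ Ja, updatePop cocz P (flipOne xa j) ∈ E := by
    intro j hj
    obtain ⟨hj1, hj2⟩ := (Finset.mem_filter.mp hj).2
    apply hgood xa hxaP hxag1 j hj1
    have hflip := g2_flipOne_true n xa j hj1 hj2
    have ha' : 1 ≤ a := by
      rw [← hJacard]
      exact Finset.card_pos.mpr ⟨j, hj⟩
    rw [show g2 (flipOne xa j) = a - 1 by omega]
    exact ha1 ha'
  -- probability computation
  set q := ENNReal.ofReal (1/(Real.exp 1 * n)) with hq
  have hprob : prob (modStep cocz mutOp g2 (n/2) P) E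
      = ∑' i : Fin (n/2+1), ((n/2+1 : ℕ) : ℝ≥0∞)⁻¹ *
        ((if h : (P.filter fun z => g2 z = ((i : Fin (n/2+1)):ℕ)).Nonempty then
          (PMF.uniformOfFinset _ h).bind fun z => (mutOp z).map fun y => updatePop cocz P y
        else PMF.pure P).toOuterMeasure E) := by
    rw [prob, modStep, PMF.toOuterMeasure_bind_apply]
    apply tsum_congr
    intro i
    rw [PMF.uniformOfFintype_apply, Fintype.card_fin]
  have hbranch : ∀ (x : Individual n), x ∈ P → ∀ (J : Finset (Fin n)),
      (∀ j ∈ J, updatePop cocz P (flipOne x j) ∈ E) →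
      (J.card : ℝ≥0∞) * q ≤
      ((if h : (P.filter fun z => g2 z = g2 x).Nonempty then
        (PMF.uniformOfFinset _ h).bind fun z => (mutOp z).map fun y => updatePop cocz P y
      else PMF.pure P).toOuterMeasure E) :=
    fun x hx J hJ => branch_lb n hn2 mutOp hmut P x (g2 x) (hsingle x hx) E J hJ
  have hmain : (((n/2 - b + a : ℕ)) : ℝ≥0∞) * q * ((n/2+1 : ℕ) : ℝ≥0∞)⁻¹ ≤
      prob (modStep cocz mutOp g2 (n/2) P) E := by
    rw [hprob]
    set f : Fin (n/2+1) → ℝ≥0∞ := fun i => ((n/2+1 : ℕ) : ℝ≥0∞)⁻¹ *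
        ((if h : (P.filter fun z => g2 z = ((i : Fin (n/2+1)):ℕ)).Nonempty then
          (PMF.uniformOfFinset _ h).bind fun z => (mutOp z).map fun y => updatePop cocz P y
        else PMF.pure P).toOuterMeasure E) with hf
    set ib : Fin (n/2+1) := ⟨b, by omega⟩ with hib
    set ia : Fin (n/2+1) := ⟨a, by omega⟩ with hia
    rcases Nat.eq_or_lt_of_le hab with heq | hlt
    · -- a = b : single branch with union of flips
      have hxaxb : xa = xb := g2_injOn n P hvalid xa hxaP xb hxbP (by rw [hxag2, hxbg2, heq])
      have hdisj : Disjoint Ja Jb := by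
        rw [Finset.disjoint_left]
        intro j hja hjb
        have h1 := (Finset.mem_filter.mp hja).2.2
        have h2 := (Finset.mem_filter.mp hjb).2.2
        rw [hxaxb] at h1
        rw [h1] at h2
        exact Bool.noConfusion h2
      have hcard : (Ja ∪ Jb).card = n/2 - b + a := by
        rw [Finset.card_union_of_disjoint hdisj, hJacard, hJbcard]
        omega
      have hgoodU : ∀ j ∈ Ja ∪ Jb, updatePop cocz P (flipOne xb j) ∈ E := by
        intro j hj
        rcases Finset.mem_union.mp hj with h | h
        · rw [← hxaxb]; exact hJagood j h
        · exact hJbgood j h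
      calc ((n/2 - b + a : ℕ) : ℝ≥0∞) * q * ((n/2+1 : ℕ) : ℝ≥0∞)⁻¹
          = ((n/2+1 : ℕ) : ℝ≥0∞)⁻¹ * (((Ja ∪ Jb).card : ℝ≥0∞) * q) := by
            rw [hcard]; ring
        _ ≤ f ib := by
            apply mul_le_mul_right
            have := hbranch xb hxbP (Ja ∪ Jb) hgoodU
            rwa [hxbg2] at this
        _ ≤ ∑' i, f i := ENNReal.le_tsum ib
    · -- a < b : two branches
      have hne : ia ≠ ib := by
        intro hc
        rw [Fin.ext_iff] at hc
        simp only [hia, hib] at hc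
        omega
      have hsum : ∑ i ∈ ({ia, ib} : Finset (Fin (n/2+1))), f i ≤ ∑' i, f i :=
        ENNReal.sum_le_tsum _
      rw [Finset.sum_pair hne] at hsum
      refine le_trans ?_ hsum
      have h1 : ((n/2+1 : ℕ) : ℝ≥0∞)⁻¹ * ((Ja.card : ℝ≥0∞) * q) ≤ f ia := by
        apply mul_le_mul_right
        have := hbranch xa hxaP Ja hJagood
        rwa [hxag2] at this
      have h2 : ((n/2+1 : ℕ) : ℝ≥0∞)⁻¹ * ((Jb.card : ℝ≥0∞) * q) ≤ f ib := by
        apply mul_le_mul_right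
        have := hbranch xb hxbP Jb hJbgood
        rwa [hxbg2] at this
      calc ((n/2 - b + a : ℕ) : ℝ≥0∞) * q * ((n/2+1 : ℕ) : ℝ≥0∞)⁻¹
          = ((n/2+1 : ℕ) : ℝ≥0∞)⁻¹ * ((Ja.card : ℝ≥0∞) * q)
            + ((n/2+1 : ℕ) : ℝ≥0∞)⁻¹ * ((Jb.card : ℝ≥0∞) * q) := by
            rw [hJacard, hJbcard]
            push_cast
            ring
        _ ≤ f ia + f ib := add_le_add h1 h2
  -- final numeric comparison
  refine le_trans ?_ hmain
  have hcast1 : ((n/2+1 : ℕ) : ℝ≥0∞)⁻¹ = ENNReal.ofReal (1/(((n/2:ℕ):ℝ)+1)) := by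
    rw [show (((n/2:ℕ):ℝ)+1) = (((n/2+1:ℕ)):ℝ) by push_cast; ring,
      ofReal_inv_nat (n/2+1) (by omega)]
  have hcast2 : (((n/2 - b + a : ℕ)) : ℝ≥0∞) = ENNReal.ofReal ((n/2 - b + a : ℕ) : ℝ) :=
    (ENNReal.ofReal_natCast _).symm
  rw [hcast2, hcast1, hq, ← ENNReal.ofReal_mul (by positivity), ← ENNReal.ofReal_mul (by positivity)]
  apply ENNReal.ofReal_le_ofReal
  set M : ℕ := n/2 - b + a with hM
  have hMZ : n/2 + 1 ≤ M + Z := by omega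
  have hMr : ((n/2:ℕ):ℝ) + 1 - (Z:ℝ) ≤ (M:ℝ) := by
    have : ((n/2 + 1 : ℕ):ℝ) ≤ ((M + Z : ℕ):ℝ) := by exact_mod_cast hMZ
    push_cast at this
    linarith
  have he : (0:ℝ) < Real.exp 1 := Real.exp_pos 1
  have hZm : (Z:ℝ) < δ * ((n/2:ℕ):ℝ) := by
    rw [← hmr]; linarith [hZδ]
  have hmpos : (1:ℝ) ≤ ((n/2:ℕ):ℝ) := by exact_mod_cast hm1
  have hnr : (n:ℝ) = 2 * ((n/2:ℕ):ℝ) := by rw [← hmr]; ring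
  have hM1 : (1-δ) * ((n/2:ℕ):ℝ) ≤ (M:ℝ) := by nlinarith
  have key : (1-δ)/(4*Real.exp 1) ≤ (M:ℝ)*(1/(Real.exp 1 * n)) := by
    rw [mul_one_div, div_le_div_iff₀ (by positivity) (by positivity)]
    have hMnn : (0:ℝ) ≤ (M:ℝ) := Nat.cast_nonneg M
    nlinarith [mul_le_mul_of_nonneg_left hM1 he.le, mul_nonneg hMnn he.le]
  calc 1 / ((n:ℝ) / 2 + 1) * ((1 - δ) / (4 * Real.exp 1))
      ≤ 1 / ((n:ℝ)/2+1) * ((M:ℝ)*(1/(Real.exp 1 * n))) := by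
        apply mul_le_mul_of_nonneg_left key (by positivity)
    _ = (M:ℝ) * (1/(Real.exp 1 * n)) * (1/(((n/2:ℕ):ℝ)+1)) := by
        rw [hmr]; ring


end GSEMOPaper
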